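/- Let C be an X-neighbour transitive code in H(m,q) with minimum distance δ ≥ 3, and let 𝒥 be an X-invariant partition of the coordinate set {1,…,m}. Then for each J ∈ 𝒥, the projected code π_J(C) is χ(X_J)-neighbour transitive, where X_J is the setwise stabiliser of J in X and χ(x) denotes the induced automorphism of H(J,q). -/

import Mathlib

/-- Distance from a vertex to a code. -/
noncomputable def distToCode {ι Q : Type*} [Fintype ι] [DecidableEq Q]
    (ν : ι → Q) (C : Set (ι → Q)) : ℕ :=
  sInf {d | ∃ β ∈ C, d = hammingDist ν β}

/-- The automorphism of `H(m,q)` determined by `h ∈ Sym(Q)^m`, `σ ∈ Sym(Fin m)`. -/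
def hammAut {m : ℕ} {Q : Type*} (h : Fin m → Equiv.Perm Q) (σ : Equiv.Perm (Fin m)) :
    Equiv.Perm (Fin m → Q) :=
  (Equiv.piCongrRight h).trans (Equiv.arrowCongr σ (Equiv.refl Q))

/-- `C` is `X`-neighbour transitive: `X` consists of Hamming graph automorphisms,
stabilises `C` setwise, and acts transitively on `C` and on the neighbour set `C₁`. -/
def NbrTrans {m : ℕ} {Q : Type*} [DecidableEq Q]
    (X : Subgroup (Equiv.Perm (Fin m → Q))) (C : Set (Fin m → Q)) : Prop :=
  (∀ x ∈ X, ∃ h σ, x = hammAut h σ) ∧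
  (∀ x ∈ X, (⇑x) '' C = C) ∧
  (∀ α ∈ C, ∀ β ∈ C, ∃ x ∈ X, x α = β) ∧
  (∀ ν₁ ν₂ : Fin m → Q, distToCode ν₁ C = 1 → distToCode ν₂ C = 1 →
    ∃ x ∈ X, x ν₁ = ν₂)

/-- Projection of a vertex of `H(m,q)` onto the coordinates in `J`. -/
def proj {m : ℕ} {Q : Type*} (J : Finset (Fin m)) (α : Fin m → Q) : J → Q :=
  fun j => α j

section Helpers

lemma hammAut_apply {m : ℕ} {Q : Type*} (h : Fin m → Equiv.Perm Q) (σ : Equiv.Perm (Fin m))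
    (f : Fin m → Q) (i : Fin m) : hammAut h σ f i = h (σ.symm i) (f (σ.symm i)) := rfl

lemma hammAut_one {m : ℕ} {Q : Type*} :
    hammAut (fun _ : Fin m => (1 : Equiv.Perm Q)) 1 = 1 :=
  Equiv.ext fun _ => funext fun _ => rfl

lemma hammAut_dist {m : ℕ} {Q : Type*} [DecidableEq Q] (h : Fin m → Equiv.Perm Q)
    (σ : Equiv.Perm (Fin m)) (f g : Fin m → Q) :
    hammingDist (hammAut h σ f) (hammAut h σ g) = hammingDist f g := by
  unfold hammingDist
  apply Finset.card_nbij' (i := fun a => σ.symm a) (j := fun a => σ a)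
  · intro a ha
    simpa [hammAut_apply] using ha
  · intro a ha
    simpa [hammAut_apply] using ha
  · intro a _; simp
  · intro a _; simp

lemma diff_singleton {ι Q : Type*} [Fintype ι] [DecidableEq Q] {f g : ι → Q}
    (hfg : hammingDist f g = 1) :
    ∃ j, f j ≠ g j ∧ ∀ k, k ≠ j → f k = g k := by
  rw [hammingDist, Finset.card_eq_one] at hfg
  obtain ⟨j, hj⟩ := hfg
  refine ⟨j, ?_, ?_⟩
  · have : j ∈ ({j} : Finset ι) := Finset.mem_singleton_self j
    rw [← hj, Finset.mem_filter] at this; exact this.2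
  · intro k hk
    by_contra hne
    have : k ∈ ({j} : Finset ι) := by rw [← hj, Finset.mem_filter]; exact ⟨Finset.mem_univ _, hne⟩
    exact hk (Finset.mem_singleton.mp this)

lemma dist_eq_one {ι Q : Type*} [Fintype ι] [DecidableEq Q] {f g : ι → Q} (j : ι)
    (h1 : f j ≠ g j) (h2 : ∀ k, k ≠ j → f k = g k) : hammingDist f g = 1 := by
  rw [hammingDist]
  have : ({i | f i ≠ g i} : Finset ι) = {j} := by
    ext k
    simp only [Finset.mem_filter, Finset.mem_univ, true_and, Finset.mem_singleton]
    constructor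
    · intro hk; by_contra hkj; exact hk (h2 k hkj)
    · rintro rfl; exact h1
  rw [this, Finset.card_singleton]

lemma distToCode_eq_one {ι Q : Type*} [Fintype ι] [DecidableEq Q] {ν : ι → Q}
    {C : Set (ι → Q)} (α : ι → Q) (hα : α ∈ C) (h1 : hammingDist ν α = 1)
    (h0 : ∀ β ∈ C, ν ≠ β) : distToCode ν C = 1 := by
  have hmem : (1 : ℕ) ∈ {d | ∃ β ∈ C, d = hammingDist ν β} := ⟨α, hα, h1.symm⟩
  have hle : distToCode ν C ≤ 1 := Nat.sInf_le hmem
  have hne : distToCode ν C ≠ 0 := by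
    intro h
    have := Nat.sInf_mem (⟨1, hmem⟩ : Set.Nonempty {d | ∃ β ∈ C, d = hammingDist ν β})
    rw [distToCode] at h
    rw [h] at this
    obtain ⟨β, hβ, hd⟩ := this
    exact h0 β hβ (hammingDist_eq_zero.mp hd.symm)
  omega

end Helpers

section Key

variable {m : ℕ} {Q : Type*} [DecidableEq Q]

lemma key_lemma
    (X : Subgroup (Equiv.Perm (Fin m → Q))) (C : Set (Fin m → Q))
    (hNT : NbrTrans X C) {δ : ℕ} (hδ3 : 3 ≤ δ)
    (hδ : ∀ α ∈ C, ∀ β ∈ C, α ≠ β → δ ≤ hammingDist α β)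
    (𝒥 : Finset (Finset (Fin m)))
    (hpart : ∀ k : Fin m, ∃! J', J' ∈ 𝒥 ∧ k ∈ J')
    (hinv : ∀ (h : Fin m → Equiv.Perm Q) (σ : Equiv.Perm (Fin m)),
      hammAut h σ ∈ X → ∀ J' ∈ 𝒥, J'.image σ ∈ 𝒥)
    (J : Finset (Fin m)) (hJ : J ∈ 𝒥)
    {α β ν₁ ν₂ : Fin m → Q} (hα : α ∈ C) (hβ : β ∈ C)
    {j₁ j₂ : Fin m} (hj₁ : j₁ ∈ J) (hj₂ : j₂ ∈ J)
    (hd1 : ν₁ j₁ ≠ α j₁) (he1 : ∀ k, k ≠ j₁ → ν₁ k = α k)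
    (hd2 : ν₂ j₂ ≠ β j₂) (he2 : ∀ k, k ≠ j₂ → ν₂ k = β k) :
    ∃ y : Equiv.Perm (↥J → Q),
      (∃ (h : Fin m → Equiv.Perm Q) (σ : Equiv.Perm (Fin m)),
        hammAut h σ ∈ X ∧ J.image σ = J ∧
        ∀ γ : Fin m → Q, y (proj J γ) = proj J (hammAut h σ γ)) ∧
      y (proj J ν₁) = proj J ν₂ ∧ y (proj J α) = proj J β := by
  obtain ⟨hX1, hX2, hX3, hX4⟩ := hNT
  -- ν₁ and ν₂ are at distance 1 from the code
  have hdist1 : hammingDist ν₁ α = 1 := dist_eq_one j₁ hd1 he1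
  have hdist2 : hammingDist ν₂ β = 1 := dist_eq_one j₂ hd2 he2
  have hnc : ∀ (ν γ₀ : Fin m → Q), γ₀ ∈ C → hammingDist ν γ₀ = 1 →
      ∀ γ ∈ C, ν ≠ γ := by
    intro ν γ₀ hγ₀ hdist γ hγ hcon
    subst hcon
    have hne : γ₀ ≠ ν := fun e => by rw [e, hammingDist_self] at hdist; omega
    have := hδ γ₀ hγ₀ ν hγ hne
    rw [hammingDist_comm] at hdist
    omega
  have hdc1 : distToCode ν₁ C = 1 :=
    distToCode_eq_one α hα hdist1 (hnc ν₁ α hα hdist1)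
  have hdc2 : distToCode ν₂ C = 1 :=
    distToCode_eq_one β hβ hdist2 (hnc ν₂ β hβ hdist2)
  obtain ⟨x, hx, hxeq⟩ := hX4 ν₁ ν₂ hdc1 hdc2
  obtain ⟨h, σ, rfl⟩ := hX1 x hx
  -- x maps α to β
  have hxα : hammAut h σ α ∈ C := by
    rw [← hX2 _ hx]; exact ⟨α, hα, rfl⟩
  have hdxα : hammingDist ν₂ (hammAut h σ α) = 1 := by
    rw [← hxeq, hammAut_dist]; exact hdist1
  have hxβ : hammAut h σ α = β := by
    by_contra hne
    have := hδ _ hxα β hβ hne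
    have htri := hammingDist_triangle (hammAut h σ α) ν₂ β
    rw [hammingDist_comm (hammAut h σ α) ν₂] at htri
    omega
  -- the differing coordinate maps into J
  have hσj : σ j₁ = j₂ := by
    have hdiff : ν₂ (σ j₁) ≠ β (σ j₁) := by
      rw [← hxeq, ← hxβ, hammAut_apply, hammAut_apply, Equiv.symm_apply_apply]
      exact fun e => hd1 ((h j₁).injective e)
    by_contra hne
    exact hdiff (he2 _ hne)
  have himg : J.image σ = J := by
    have h𝒥 : J.image σ ∈ 𝒥 := hinv h σ hx J hJ
    have hmem : j₂ ∈ J.image σ := Finset.mem_image.mpr ⟨j₁, hj₁, hσj⟩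
    exact ((hpart j₂).unique ⟨h𝒥, hmem⟩ ⟨hJ, hj₂⟩ : J.image σ = J)
  -- build the induced permutation on H(J,q)
  have hmem1 : ∀ j : Fin m, j ∈ J → σ j ∈ J := fun j hj =>
    himg ▸ Finset.mem_image_of_mem σ hj
  have hmem2 : ∀ j : Fin m, j ∈ J → σ.symm j ∈ J := by
    intro j hj
    rw [← himg] at hj
    obtain ⟨k, hk, hsk⟩ := Finset.mem_image.mp hj
    rw [← hsk, Equiv.symm_apply_apply]; exact hk
  let σJ : Equiv.Perm ↥J :=
    ⟨fun j => ⟨σ j, hmem1 _ j.2⟩, fun j => ⟨σ.symm j, hmem2 _ j.2⟩,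
      fun j => Subtype.ext (σ.symm_apply_apply j),
      fun j => Subtype.ext (σ.apply_symm_apply j)⟩
  let y : Equiv.Perm (↥J → Q) :=
    (Equiv.piCongrRight (fun j : ↥J => h j)).trans (Equiv.arrowCongr σJ (Equiv.refl Q))
  have hcomm : ∀ γ : Fin m → Q, y (proj J γ) = proj J (hammAut h σ γ) :=
    fun γ => funext fun _ => rfl
  exact ⟨y, ⟨h, σ, hx, himg, hcomm⟩,
    by rw [hcomm ν₁, hxeq], by rw [hcomm α, hxβ]⟩

end Key

/-- For an `X`-neighbour transitive code `C` with minimum distance `δ ≥ 3` and a block `J`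
of an `X`-invariant partition of the coordinates, the projected code `π_J(C)` is
`χ(X_J)`-neighbour transitive, where `χ(x)` is the automorphism of `H(J,q)` induced by
`x ∈ X_J` (so `χ(x)(π_J α) = π_J (α^x)`). -/
theorem stmt_11 {m : ℕ} {Q : Type*} [DecidableEq Q]
    (X : Subgroup (Equiv.Perm (Fin m → Q))) (C : Set (Fin m → Q))
    (hNT : NbrTrans X C) (δ : ℕ) (hδ3 : 3 ≤ δ)
    (hδ : ∀ α ∈ C, ∀ β ∈ C, α ≠ β → δ ≤ hammingDist α β)
    (𝒥 : Finset (Finset (Fin m)))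
    (hpart : ∀ k : Fin m, ∃! J', J' ∈ 𝒥 ∧ k ∈ J')
    (hinv : ∀ (h : Fin m → Equiv.Perm Q) (σ : Equiv.Perm (Fin m)),
      hammAut h σ ∈ X → ∀ J' ∈ 𝒥, J'.image σ ∈ 𝒥)
    (J : Finset (Fin m)) (hJ : J ∈ 𝒥) :
    let χSet : Set (Equiv.Perm (↥J → Q)) :=
      {y | ∃ (h : Fin m → Equiv.Perm Q) (σ : Equiv.Perm (Fin m)),
        hammAut h σ ∈ X ∧ J.image σ = J ∧
        ∀ α : Fin m → Q, y (proj J α) = proj J (hammAut h σ α)}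
    (∀ y ∈ χSet, (⇑y) '' ((proj J) '' C) = (proj J) '' C) ∧
    (∀ u ∈ (proj J) '' C, ∀ v ∈ (proj J) '' C, ∃ y ∈ χSet, y u = v) ∧
    (∀ ν₁ ν₂ : ↥J → Q, distToCode ν₁ ((proj J) '' C) = 1 →
      distToCode ν₂ ((proj J) '' C) = 1 → ∃ y ∈ χSet, y ν₁ = ν₂) := by
  intro χSet
  have hone : (1 : Equiv.Perm (↥J → Q)) ∈ χSet := by
    refine ⟨fun _ => 1, 1, ?_, ?_, ?_⟩
    · rw [hammAut_one]; exact X.one_mem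
    · simp
    · intro γ; rw [hammAut_one]; rfl
  refine ⟨?_, ?_, ?_⟩
  · -- χSet stabilises the projected code
    rintro y ⟨h, σ, hx, himg, hcomm⟩
    apply Set.eq_of_subset_of_subset
    · rintro _ ⟨_, ⟨γ, hγ, rfl⟩, rfl⟩
      refine ⟨hammAut h σ γ, ?_, (hcomm γ).symm⟩
      rw [← hNT.2.1 _ hx]; exact ⟨γ, hγ, rfl⟩
    · rintro _ ⟨γ, hγ, rfl⟩
      have : γ ∈ (⇑(hammAut h σ)) '' C := by rw [hNT.2.1 _ hx]; exact hγ
      obtain ⟨γ₀, hγ₀, rfl⟩ := this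
      exact ⟨proj J γ₀, ⟨γ₀, hγ₀, rfl⟩, hcomm γ₀⟩
  · -- transitivity on the projected code
    rintro _ ⟨α, hα, rfl⟩ _ ⟨β, hβ, rfl⟩
    rcases subsingleton_or_nontrivial (↥J → Q) with hs | hn
    · exact ⟨1, hone, Subsingleton.elim _ _⟩
    · obtain ⟨f, g, hfg⟩ := exists_pair_ne (↥J → Q)
      have : ∃ j : ↥J, f j ≠ g j := by
        by_contra hc; push_neg at hc; exact hfg (funext hc)
      obtain ⟨j, hj⟩ := this
      set c : Q := if α ↑j = f j then g j else f j with hc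
      have hcne : c ≠ α ↑j := by
        rw [hc]; split_ifs with h'
        · rw [h']; exact fun e => hj (h' ▸ e.symm)
        · exact fun e => h' e.symm
      set d : Q := if β ↑j = f j then g j else f j with hd
      have hdne : d ≠ β ↑j := by
        rw [hd]; split_ifs with h'
        · rw [h']; exact fun e => hj (h' ▸ e.symm)
        · exact fun e => h' e.symm
      obtain ⟨y, hy, _, hyab⟩ :=
        key_lemma X C hNT hδ3 hδ 𝒥 hpart hinv J hJ hα hβ j.2 j.2
          (ν₁ := Function.update α ↑j c) (ν₂ := Function.update β ↑j d)
          (by rw [Function.update_self]; exact hcne)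
          (fun k hk => Function.update_of_ne hk _ _)
          (by rw [Function.update_self]; exact hdne)
          (fun k hk => Function.update_of_ne hk _ _)
      exact ⟨y, hy, hyab⟩
  · -- transitivity on the neighbours of the projected code
    intro ν₁ ν₂ d1 d2
    have extract : ∀ ν : ↥J → Q, distToCode ν ((proj J) '' C) = 1 →
        ∃ α ∈ C, hammingDist ν (proj J α) = 1 := by
      intro ν hν
      have hne : Set.Nonempty {d | ∃ β ∈ (proj J) '' C, d = hammingDist ν β} := by
        by_contra hc
        rw [Set.not_nonempty_iff_eq_empty] at hc
        rw [distToCode, hc, Nat.sInf_empty] at hν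
        omega
      have := Nat.sInf_mem hne
      rw [show sInf {d | ∃ β ∈ (proj J) '' C, d = hammingDist ν β}
          = distToCode ν ((proj J) '' C) from rfl, hν] at this
      obtain ⟨_, ⟨α, hα, rfl⟩, hd⟩ := this
      exact ⟨α, hα, hd.symm⟩
    obtain ⟨α, hα, hdα⟩ := extract ν₁ d1
    obtain ⟨β, hβ, hdβ⟩ := extract ν₂ d2
    obtain ⟨jj₁, hjd1, hje1⟩ := diff_singleton hdα
    obtain ⟨jj₂, hjd2, hje2⟩ := diff_singleton hdβ
    set nu1 : Fin m → Q := fun i => if hi : i ∈ J then ν₁ ⟨i, hi⟩ else α i with hnu1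
    set nu2 : Fin m → Q := fun i => if hi : i ∈ J then ν₂ ⟨i, hi⟩ else β i with hnu2
    have hproj1 : proj J nu1 = ν₁ := funext fun k => by
      simp only [proj, hnu1, dif_pos k.2]
    have hproj2 : proj J nu2 = ν₂ := funext fun k => by
      simp only [proj, hnu2, dif_pos k.2]
    have hd1 : nu1 ↑jj₁ ≠ α ↑jj₁ := by
      simpa only [hnu1, dif_pos jj₁.2, proj, Subtype.coe_eta] using hjd1
    have he1 : ∀ k, k ≠ ↑jj₁ → nu1 k = α k := by
      intro k hk
      by_cases hkJ : k ∈ J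
      · simp only [hnu1, dif_pos hkJ]
        exact hje1 ⟨k, hkJ⟩ fun e => hk (congrArg Subtype.val e)
      · simp only [hnu1, dif_neg hkJ]
    have hd2 : nu2 ↑jj₂ ≠ β ↑jj₂ := by
      simpa only [hnu2, dif_pos jj₂.2, proj, Subtype.coe_eta] using hjd2
    have he2 : ∀ k, k ≠ ↑jj₂ → nu2 k = β k := by
      intro k hk
      by_cases hkJ : k ∈ J
      · simp only [hnu2, dif_pos hkJ]
        exact hje2 ⟨k, hkJ⟩ fun e => hk (congrArg Subtype.val e)
      · simp only [hnu2, dif_neg hkJ]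
    obtain ⟨y, hy, hyν, _⟩ :=
      key_lemma X C hNT hδ3 hδ 𝒥 hpart hinv J hJ hα hβ jj₁.2 jj₂.2 hd1 he1 hd2 he2
    refine ⟨y, hy, ?_⟩
    rw [← hproj1, hyν, hproj2]
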